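/- Let $0 < B < 1$ and let $M$ be a positive integer. Then the equation $\tan(k_2(M+1)) = \frac{B \sin k_2}{B \cos k_2 - 1}$ has exactly one solution $k_2$ in each open interval $I_n := \left(\frac{\pi(n + 1/2)}{M+1}, \frac{\pi(n+1)}{M+1}\right)$, for $n = 0, 1, \ldots, M-1$. -/

import Mathlib

set_option maxHeartbeats 1000000
open Real Set

lemma absSinNatMulLe (x : ℝ) (hx : 0 ≤ Real.sin x) :
    ∀ m : ℕ, |Real.sin (m * x)| ≤ m * Real.sin x := by
  intro m
  induction m with
  | zero => simp
  | succ m ih =>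
    have h1 : ((m + 1 : ℕ) : ℝ) * x = m * x + x := by push_cast; ring
    rw [h1, Real.sin_add]
    have c1 : |Real.sin (m*x) * Real.cos x| ≤ |Real.sin (m*x)| := by
      rw [abs_mul]
      calc |Real.sin (m*x)| * |Real.cos x| ≤ |Real.sin (m*x)| * 1 := by
            gcongr; exact Real.abs_cos_le_one x
        _ = |Real.sin (m*x)| := mul_one _
    have c2 : |Real.cos (m*x) * Real.sin x| ≤ Real.sin x := by
      rw [abs_mul, abs_of_nonneg hx]
      calc |Real.cos (m*x)| * Real.sin x ≤ 1 * Real.sin x := by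
            gcongr; exact Real.abs_cos_le_one _
        _ = Real.sin x := one_mul _
    have := abs_add_le (Real.sin (m*x) * Real.cos x) (Real.cos (m*x) * Real.sin x)
    push_cast
    linarith

lemma sinSignPos (x : ℝ) (j : ℤ) (h1 : j * π < x) (h2 : x < (j+1) * π) :
    0 < (-1:ℝ)^j * Real.sin x := by
  have hs : Real.sin x = (-1:ℝ)^j * Real.sin (x - j*π) := by
    have h0 := Real.sin_add_int_mul_pi (x - j*π) j
    have he : x - j*π + j*π = x := by ring
    rw [he] at h0
    exact h0
  have hpos : 0 < Real.sin (x - j*π) := by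
    apply Real.sin_pos_of_pos_of_lt_pi <;> nlinarith [Real.pi_pos]
  rcases Int.even_or_odd j with he | ho
  · rw [he.neg_one_zpow] at hs ⊢; simpa [hs] using hpos
  · rw [ho.neg_one_zpow] at hs ⊢; rw [hs]; linarith

theorem unique_frequency_in_interval (B : ℝ) (hB : 0 < B) (hB' : B < 1)
    (M : ℕ) (hM : 0 < M) :
    ∀ n : ℕ, n < M →
      ∃! k2 : ℝ, k2 ∈ Set.Ioo (Real.pi * (n + 1/2) / (M + 1)) (Real.pi * (n + 1) / (M + 1)) ∧
        Real.tan (k2 * (M + 1)) = B * Real.sin k2 / (B * Real.cos k2 - 1) := by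
  intro n hn
  have pi_pos := Real.pi_pos
  set N : ℝ := (M:ℝ) + 1 with hN
  have hM1 : (1:ℝ) ≤ (M:ℝ) := by exact_mod_cast hM
  have hnM : (n:ℝ) + 1 ≤ (M:ℝ) := by exact_mod_cast hn
  have hN0 : (0:ℝ) < N := by rw [hN]; linarith
  set a : ℝ := π * (n + 1/2) / N with ha
  set b : ℝ := π * (n + 1) / N with hb
  have haN : a * N = π * ((n:ℝ) + 1/2) := div_mul_cancel₀ _ (ne_of_gt hN0)
  have hbN : b * N = π * ((n:ℝ) + 1) := div_mul_cancel₀ _ (ne_of_gt hN0)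
  have ha0 : 0 < a := by
    rw [ha]
    apply div_pos _ hN0
    have : (0:ℝ) ≤ (n:ℝ) := Nat.cast_nonneg n
    nlinarith
  have hab : a < b := by
    rw [ha, hb, div_lt_div_iff₀ hN0 hN0]
    have : (0:ℝ) ≤ (n:ℝ) := Nat.cast_nonneg n
    nlinarith
  have hbpi : b < π := by
    rw [hb, div_lt_iff₀ hN0, hN]
    nlinarith
  -- key pointwise facts
  have key : ∀ k, a < k → k < b →
      0 < Real.sin k ∧ Real.cos (k*N) ≠ 0 ∧ 0 < (-1:ℝ)^n * Real.sin (k*N) := by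
    intro k hak hkb
    have hk0 : 0 < k := lt_trans ha0 hak
    have hkpi : k < π := lt_trans hkb hbpi
    have hsink : 0 < Real.sin k := Real.sin_pos_of_pos_of_lt_pi hk0 hkpi
    have hl : π * ((n:ℝ) + 1/2) < k * N := by
      rw [← haN]; exact mul_lt_mul_of_pos_right hak hN0
    have hr : k * N < π * ((n:ℝ) + 1) := by
      rw [← hbN]; exact mul_lt_mul_of_pos_right hkb hN0
    have hcos : Real.cos (k*N) ≠ 0 := by
      intro h
      rw [Real.cos_eq_zero_iff] at h
      obtain ⟨j, hj⟩ := h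
      rw [hj] at hl hr
      have h1 : (n:ℝ) < (j:ℝ) := by nlinarith
      have h2 : (j:ℝ) < (n:ℝ) + 1/2 := by nlinarith
      have h1' : (n:ℤ) < j := by exact_mod_cast h1
      have h2' : (j:ℝ) < (n:ℝ) + 1 := by linarith
      have h2'' : j < (n:ℤ) + 1 := by exact_mod_cast h2'
      omega
    have hsin : 0 < (-1:ℝ)^n * Real.sin (k*N) := by
      have := sinSignPos (k*N) (n:ℤ) (by push_cast; nlinarith) (by push_cast; nlinarith)
      rwa [zpow_natCast] at this
    exact ⟨hsink, hcos, hsin⟩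
  -- equivalence with the sine form
  have heq : ∀ k, a < k → k < b →
      (Real.tan (k * N) = B * Real.sin k / (B * Real.cos k - 1) ↔
        Real.sin (k*N) = B * Real.sin (k*(M:ℝ))) := by
    intro k hak hkb
    obtain ⟨hsink, hcos, _⟩ := key k hak hkb
    have hden : B * Real.cos k - 1 < 0 := by
      have h1 := mul_le_mul_of_nonneg_left (Real.cos_le_one k) (le_of_lt hB)
      linarith
    have hden' : B * Real.cos k - 1 ≠ 0 := ne_of_lt hden
    have hs : Real.sin (k*(M:ℝ)) =
        Real.sin (k*N) * Real.cos k - Real.cos (k*N) * Real.sin k := by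
      rw [show k*(M:ℝ) = k*N - k by rw [hN]; ring, Real.sin_sub]
    rw [Real.tan_eq_sin_div_cos, div_eq_div_iff hcos hden']
    constructor <;> intro h
    · linear_combination -h - B*hs
    · linear_combination -h - B*hs
  -- existence
  have hsq : (-1:ℝ)^n * (-1:ℝ)^n = 1 := by
    rw [← pow_add]
    exact Even.neg_one_pow ⟨n, rfl⟩
  set G : ℝ → ℝ := fun k => (-1:ℝ)^n * (B * Real.sin (k*(M:ℝ)) - Real.sin (k*N)) with hG
  have hsinaN : Real.sin (a*N) = (-1:ℝ)^n := by
    have h0 := Real.sin_add_int_mul_pi (π/2) (n:ℤ)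
    rw [haN, show π * ((n:ℝ) + 1/2) = π/2 + ((n:ℤ):ℝ)*π by push_cast; ring, h0,
      Real.sin_pi_div_two, zpow_natCast, mul_one]
  have hsinaM : Real.sin (a*(M:ℝ)) = (-1:ℝ)^n * Real.cos a := by
    have haM : a*(M:ℝ) = (π/2 - a) + ((n:ℤ):ℝ)*π := by
      have : a*(M:ℝ) = a*N - a := by rw [hN]; ring
      rw [this, haN]; push_cast; ring
    rw [haM, Real.sin_add_int_mul_pi, Real.sin_pi_div_two_sub, zpow_natCast]
  have hGa : G a < 0 := by
    have : G a = B * Real.cos a - 1 := by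
      rw [hG]
      simp only
      rw [hsinaM, hsinaN]
      linear_combination (B * Real.cos a - 1) * hsq
    rw [this]
    nlinarith [Real.cos_le_one a]
  have hGb : 0 < G b := by
    have hsinbN : Real.sin (b*N) = 0 := by
      rw [hbN, show π * ((n:ℝ) + 1) = (((n:ℤ)+1 : ℤ):ℝ) * π by push_cast; ring]
      exact Real.sin_int_mul_pi _
    have hbM : 0 < (-1:ℝ)^n * Real.sin (b*(M:ℝ)) := by
      have hb0 : 0 < b := lt_trans ha0 hab
      have hbM' : b*(M:ℝ) = π * ((n:ℝ)+1) - b := by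
        have : b*(M:ℝ) = b*N - b := by rw [hN]; ring
        rw [this, hbN]
      have := sinSignPos (b*(M:ℝ)) (n:ℤ) (by rw [hbM']; push_cast; nlinarith)
        (by rw [hbM']; push_cast; nlinarith)
      rwa [zpow_natCast] at this
    have : G b = B * ((-1:ℝ)^n * Real.sin (b*(M:ℝ))) := by
      rw [hG]; simp only; rw [hsinbN]; ring
    rw [this]
    positivity
  have hGcont : ContinuousOn G (Icc a b) := by
    apply Continuous.continuousOn
    fun_prop
  obtain ⟨c, hc, hGc⟩ := intermediate_value_Ioo (le_of_lt hab) hGcont ⟨hGa, hGb⟩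
  have hceq : Real.sin (c*N) = B * Real.sin (c*(M:ℝ)) := by
    have hne : ((-1:ℝ)^n) ≠ 0 := by
      intro h; rw [h] at hsq; simp at hsq
    have : B * Real.sin (c*(M:ℝ)) - Real.sin (c*N) = 0 := by
      rcases mul_eq_zero.mp hGc with h | h
      · exact absurd h hne
      · exact h
    linarith
  -- uniqueness core
  have huniq : ∀ k1 k2, k1 ∈ Ioo a b → k2 ∈ Ioo a b → k1 < k2 →
      Real.sin (k1*N) = B * Real.sin (k1*(M:ℝ)) →
      Real.sin (k2*N) = B * Real.sin (k2*(M:ℝ)) → False := by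
    intro k1 k2 hk1 hk2 h12 he1 he2
    obtain ⟨hs1, hc1, hp1⟩ := key k1 hk1.1 hk1.2
    obtain ⟨hs2, hc2, hp2⟩ := key k2 hk2.1 hk2.2
    have hm1 : 0 < (-1:ℝ)^n * Real.sin (k1*(M:ℝ)) := by
      rw [he1] at hp1; nlinarith
    have hm2 : 0 < (-1:ℝ)^n * Real.sin (k2*(M:ℝ)) := by
      rw [he2] at hp2; nlinarith
    have hba : b - a = π/(2*N) := by
      rw [ha, hb]; field_simp; ring
    have hlen : (k2 - k1) * (M:ℝ) < π := by
      have h1 : k2 - k1 < π/(2*N) := by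
        rw [← hba]
        have := hk1.1; have := hk2.2; linarith
      have h2 : (k2 - k1) * (M:ℝ) < π/(2*N) * (M:ℝ) := by
        apply mul_lt_mul_of_pos_right h1; linarith
      have h3 : π/(2*N) * (M:ℝ) < π := by
        rw [div_mul_eq_mul_div, div_lt_iff₀ (by linarith : (0:ℝ) < 2*N), hN]
        nlinarith [mul_pos pi_pos (show (0:ℝ) < (M:ℝ)+2 by linarith)]
      linarith
    -- sin(k*M) never vanishes on [k1,k2]
    have hsMne : ∀ k ∈ Icc k1 k2, Real.sin (k*(M:ℝ)) ≠ 0 := by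
      intro k hk hk0
      rw [Real.sin_eq_zero_iff] at hk0
      obtain ⟨j, hj⟩ := hk0
      have hMpos : (0:ℝ) < (M:ℝ) := by linarith
      have hk1j : k1*(M:ℝ) < (j:ℝ)*π := by
        have hle : k1*(M:ℝ) ≤ (j:ℝ)*π := by
          rw [hj]; exact mul_le_mul_of_nonneg_right hk.1 (le_of_lt hMpos)
        rcases lt_or_eq_of_le hle with h | h
        · exact h
        · exfalso
          have h0 : Real.sin (k1*(M:ℝ)) = 0 := by rw [h]; exact Real.sin_int_mul_pi j
          rw [h0, mul_zero] at hm1; exact lt_irrefl _ hm1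
      have hk2j : (j:ℝ)*π < k2*(M:ℝ) := by
        have hle : (j:ℝ)*π ≤ k2*(M:ℝ) := by
          rw [hj]; exact mul_le_mul_of_nonneg_right hk.2 (le_of_lt hMpos)
        rcases lt_or_eq_of_le hle with h | h
        · exact h
        · exfalso
          have h0 : Real.sin (k2*(M:ℝ)) = 0 := by rw [← h]; exact Real.sin_int_mul_pi j
          rw [h0, mul_zero] at hm2; exact lt_irrefl _ hm2
      have hwin : k2*(M:ℝ) - k1*(M:ℝ) < π := by
        have hr : k2*(M:ℝ) - k1*(M:ℝ) = (k2 - k1)*(M:ℝ) := by ring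
        linarith
      have hA := sinSignPos (k1*(M:ℝ)) (j-1) (by push_cast; linarith) (by push_cast; linarith)
      have hB2 := sinSignPos (k2*(M:ℝ)) j hk2j (by push_cast; linarith)
      have hprodneg : ((-1:ℝ))^(j-1) * (-1:ℝ)^j = -1 := by
        rw [← zpow_add₀ (by norm_num : (-1:ℝ) ≠ 0)]
        exact Odd.neg_one_zpow ⟨j-1, by ring⟩
      have p1 := mul_pos hA hB2
      have p2 := mul_pos hm1 hm2
      have e1 : ((-1:ℝ)^(j-1) * Real.sin (k1*(M:ℝ))) * ((-1:ℝ)^j * Real.sin (k2*(M:ℝ)))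
          = -(Real.sin (k1*(M:ℝ)) * Real.sin (k2*(M:ℝ))) := by
        linear_combination (Real.sin (k1*(M:ℝ)) * Real.sin (k2*(M:ℝ))) * hprodneg
      have e2 : ((-1:ℝ)^n * Real.sin (k1*(M:ℝ))) * ((-1:ℝ)^n * Real.sin (k2*(M:ℝ)))
          = Real.sin (k1*(M:ℝ)) * Real.sin (k2*(M:ℝ)) := by
        linear_combination (Real.sin (k1*(M:ℝ)) * Real.sin (k2*(M:ℝ))) * hsq
      rw [e1] at p1
      rw [e2] at p2
      linarith
    -- |cos(k*N)| < 1 on [k1,k2]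
    have hcoslt : ∀ k ∈ Icc k1 k2, (Real.cos (k*N))^2 < 1 := by
      intro k hk
      obtain ⟨_, _, hp⟩ := key k (lt_of_lt_of_le hk1.1 hk.1) (lt_of_le_of_lt hk.2 hk2.2)
      have hne : Real.sin (k*N) ≠ 0 := by
        intro h; rw [h, mul_zero] at hp; exact lt_irrefl 0 hp
      nlinarith [Real.sin_sq_add_cos_sq (k*N), pow_two_pos_of_ne_zero hne]
    set F : ℝ → ℝ := fun k => Real.sin (k*N) / Real.sin (k*(M:ℝ)) with hF
    have hFcont : ContinuousOn F (Icc k1 k2) := by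
      apply ContinuousOn.div
      · fun_prop
      · fun_prop
      · exact hsMne
    have hFderiv : ∀ x ∈ interior (Icc k1 k2), deriv F x < 0 := by
      rw [interior_Icc]
      intro x hx
      have hxmem : x ∈ Icc k1 k2 := ⟨le_of_lt hx.1, le_of_lt hx.2⟩
      have hne := hsMne x hxmem
      have hd1 : HasDerivAt (fun k => Real.sin (k*N)) (Real.cos (x*N) * N) x :=
        (hasDerivAt_mul_const N).sin
      have hd2 : HasDerivAt (fun k => Real.sin (k*(M:ℝ))) (Real.cos (x*(M:ℝ)) * (M:ℝ)) x :=
        (hasDerivAt_mul_const (M:ℝ)).sin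
      have hdF := hd1.div hd2 hne
      rw [(show HasDerivAt F _ x from hdF).deriv]
      apply div_neg_of_neg_of_pos
      · -- numerator
        have hx0 : 0 < x := lt_trans ha0 (lt_of_lt_of_le hk1.1 hxmem.1)
        have hxpi : x < π := lt_trans (lt_of_le_of_lt hxmem.2 hk2.2) hbpi
        have hsinx : 0 < Real.sin x := Real.sin_pos_of_pos_of_lt_pi hx0 hxpi
        have habs : |Real.sin (x*(M:ℝ))| ≤ (M:ℝ) * Real.sin x := by
          have := absSinNatMulLe x (le_of_lt hsinx) M
          rwa [mul_comm (M:ℝ) x] at this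
        have hc2 := hcoslt x hxmem
        have hc1 : |Real.cos (x*N)| < 1 := (sq_lt_one_iff_abs_lt_one _).mp hc2
        have hp : 0 < |Real.sin (x*(M:ℝ))| := abs_pos.mpr hne
        have h2 : Real.cos (x*N) * Real.sin (x*(M:ℝ)) < (M:ℝ) * Real.sin x := by
          calc Real.cos (x*N) * Real.sin (x*(M:ℝ))
              ≤ |Real.cos (x*N) * Real.sin (x*(M:ℝ))| := le_abs_self _
            _ = |Real.cos (x*N)| * |Real.sin (x*(M:ℝ))| := abs_mul _ _
            _ < 1 * |Real.sin (x*(M:ℝ))| := mul_lt_mul_of_pos_right hc1 hp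
            _ = |Real.sin (x*(M:ℝ))| := one_mul _
            _ ≤ (M:ℝ) * Real.sin x := habs
        have hkey : Real.sin (x*N) * Real.cos (x*(M:ℝ)) - Real.cos (x*N) * Real.sin (x*(M:ℝ))
            = Real.sin x := by
          rw [← Real.sin_sub, show x*N - x*(M:ℝ) = x by rw [hN]; ring]
        have hnum : Real.cos (x*N) * N * Real.sin (x*(M:ℝ)) -
            Real.sin (x*N) * (Real.cos (x*(M:ℝ)) * (M:ℝ)) =
            Real.cos (x*N) * Real.sin (x*(M:ℝ)) - (M:ℝ) * Real.sin x := by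
          linear_combination (-(M:ℝ)) * hkey + Real.cos (x*N) * Real.sin (x*(M:ℝ)) * hN
        rw [hnum]
        linarith
      · exact pow_two_pos_of_ne_zero hne
    have hFanti : StrictAntiOn F (Icc k1 k2) :=
      strictAntiOn_of_deriv_neg (convex_Icc k1 k2) hFcont hFderiv
    have hF1 : F k1 = B := by
      rw [hF]; simp only; rw [he1]
      exact mul_div_cancel_right₀ B (hsMne k1 ⟨le_refl _, le_of_lt h12⟩)
    have hF2 : F k2 = B := by
      rw [hF]; simp only; rw [he2]
      exact mul_div_cancel_right₀ B (hsMne k2 ⟨le_of_lt h12, le_refl _⟩)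
    have := hFanti ⟨le_refl _, le_of_lt h12⟩ ⟨le_of_lt h12, le_refl _⟩ h12
    rw [hF1, hF2] at this
    exact lt_irrefl B this
  -- assemble
  refine ⟨c, ⟨hc, (heq c hc.1 hc.2).mpr hceq⟩, ?_⟩
  rintro y ⟨hy, hyeq⟩
  have hyeq' := (heq y hy.1 hy.2).mp hyeq
  by_contra hne
  rcases lt_or_gt_of_ne hne with h | h
  · exact huniq y c hy hc h hyeq' hceq
  · exact huniq c y hc hy h hceq hyeq'
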